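/- If Red_{E(S)}(s), and u is a term such that Red_{E(T)}(u{s'/x}) for every s' with Red_S(s'), then Red_{E(T)}(let x ⇐ s in u). -/

import Mathlib

/-!
Metalanguage for algebraic effects (Moggi-style `let` + effect/function symbols),
with the Recursive Path Ordering, following the paper.

Terms use de Bruijn indices.  A signature assigns each rewritable symbol an
arity, tells whether it is an effect symbol or a function symbol, and (for
function symbols) gives argument types and a result type.
-/

/-- Types of the metalanguage: base types, effect (computation) types `E T`,
and arrow types. -/
inductive Ty (B : Type) : Type where
  | base : B → Ty B
  | eff : Ty B → Ty B
  | arrow : Ty B → Ty B → Ty B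

/-- A signature of rewritable symbols. -/
structure Signature (Sym B : Type) : Type where
  arity : Sym → ℕ
  isEffect : Sym → Prop
  argTy : (γ : Sym) → Fin (arity γ) → Ty B
  resTy : Sym → Ty B

/-- Terms of the metalanguage (de Bruijn indices):
variables, λ-abstraction, application, `pure`, symbol application, and `let`. -/
inductive Tm {Sym B : Type} (Sg : Signature Sym B) : Type where
  | var : ℕ → Tm Sg
  | lam : Tm Sg → Tm Sg
  | app : Tm Sg → Tm Sg → Tm Sg
  | pure : Tm Sg → Tm Sg
  | sym : (γ : Sym) → (Fin (Sg.arity γ) → Tm Sg) → Tm Sg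
  | letin : Tm Sg → Tm Sg → Tm Sg

namespace Tm

variable {Sym B : Type} {Sg : Signature Sym B}

/-- Lift a renaming under a binder. -/
def upRen (ρ : ℕ → ℕ) : ℕ → ℕ
  | 0 => 0
  | n + 1 => ρ n + 1

/-- Renaming of de Bruijn variables. -/
def rename (ρ : ℕ → ℕ) : Tm Sg → Tm Sg
  | .var n => .var (ρ n)
  | .lam u => .lam (u.rename (upRen ρ))
  | .app s t => .app (s.rename ρ) (t.rename ρ)
  | .pure t => .pure (t.rename ρ)
  | .sym γ ts => .sym γ (fun i => (ts i).rename ρ)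
  | .letin t u => .letin (t.rename ρ) (u.rename (upRen ρ))

/-- Lift a substitution under a binder. -/
def upSub (σ : ℕ → Tm Sg) : ℕ → Tm Sg
  | 0 => .var 0
  | n + 1 => (σ n).rename Nat.succ

/-- Simultaneous (capture-avoiding) substitution. -/
def subst (σ : ℕ → Tm Sg) : Tm Sg → Tm Sg
  | .var n => σ n
  | .lam u => .lam (u.subst (upSub σ))
  | .app s t => .app (s.subst σ) (t.subst σ)
  | .pure t => .pure (t.subst σ)
  | .sym γ ts => .sym γ (fun i => (ts i).subst σ)
  | .letin t u => .letin (t.subst σ) (u.subst (upSub σ))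

/-- `subst0 t u` is `u{t/x}`: substitute `t` for the outermost variable of `u`. -/
def subst0 (t : Tm Sg) (u : Tm Sg) : Tm Sg :=
  u.subst (fun n => match n with | 0 => t | n + 1 => .var n)

/-- `FreeIn x t`: the de Bruijn variable `x` occurs free in `t`. -/
def FreeIn : Tm Sg → ℕ → Prop
  | .var n, x => x = n
  | .lam u, x => u.FreeIn (x + 1)
  | .app s t, x => s.FreeIn x ∨ t.FreeIn x
  | .pure t, x => t.FreeIn x
  | .sym _ ts, x => ∃ i, (ts i).FreeIn x
  | .letin t u, x => t.FreeIn x ∨ u.FreeIn (x + 1)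

end Tm

/-- The recursive path ordering `s ≻ t` generated by a precedence `gt` on symbols:
(1) same head symbol, lexicographically smaller arguments, and `s` dominates every
argument of `t`; (2) smaller head symbol and `s` dominates every argument of `t`;
(3) some argument `sᵢ` of `s` satisfies `sᵢ ⪰ t`. -/
inductive RPO {Sym B : Type} {Sg : Signature Sym B} (gt : Sym → Sym → Prop) :
    Tm Sg → Tm Sg → Prop where
  | lexArgs {γ : Sym} {s t : Fin (Sg.arity γ) → Tm Sg} (i : Fin (Sg.arity γ))
      (hpre : ∀ j, j < i → s j = t j) (hlt : RPO gt (s i) (t i))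
      (hdom : ∀ j, RPO gt (.sym γ s) (t j)) :
      RPO gt (.sym γ s) (.sym γ t)
  | symGt {γ γ' : Sym} {s : Fin (Sg.arity γ) → Tm Sg} {t : Fin (Sg.arity γ') → Tm Sg}
      (hγ : gt γ γ') (hdom : ∀ j, RPO gt (.sym γ s) (t j)) :
      RPO gt (.sym γ s) (.sym γ' t)
  | subtermLt {γ : Sym} {s : Fin (Sg.arity γ) → Tm Sg} (i : Fin (Sg.arity γ)) {t : Tm Sg}
      (h : RPO gt (s i) t) :
      RPO gt (.sym γ s) t
  | subtermEq {γ : Sym} {s : Fin (Sg.arity γ) → Tm Sg} (i : Fin (Sg.arity γ)) {t : Tm Sg}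
      (h : s i = t) :
      RPO gt (.sym γ s) t

/-- The relation `≻̇`: the compatible closure (closure under all term contexts)
of the union of the RPO `≻` and the metalanguage rewrites `⇝ml`
(abs-β, let-β, let-assoc, eff-assoc). -/
inductive Step {Sym B : Type} {Sg : Signature Sym B} (gt : Sym → Sym → Prop) :
    Tm Sg → Tm Sg → Prop where
  | rpo {s t : Tm Sg} : RPO gt s t → Step gt s t
  | beta {u t : Tm Sg} : Step gt (.app (.lam u) t) (Tm.subst0 t u)
  | letBeta {t u : Tm Sg} : Step gt (.letin (.pure t) u) (Tm.subst0 t u)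
  | letAssoc {t₁ t₂ u : Tm Sg} :
      Step gt (.letin (.letin t₁ t₂) u)
        (.letin t₁ (.letin t₂ (u.rename (Tm.upRen Nat.succ))))
  | effAssoc {e : Sym} {ts : Fin (Sg.arity e) → Tm Sg} {u : Tm Sg} (he : Sg.isEffect e) :
      Step gt (.letin (.sym e ts) u) (.sym e fun i => .letin (ts i) u)
  | congLam {u u' : Tm Sg} : Step gt u u' → Step gt (.lam u) (.lam u')
  | congApp₁ {s s' t : Tm Sg} : Step gt s s' → Step gt (.app s t) (.app s' t)
  | congApp₂ {s t t' : Tm Sg} : Step gt t t' → Step gt (.app s t) (.app s t')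
  | congPure {t t' : Tm Sg} : Step gt t t' → Step gt (.pure t) (.pure t')
  | congSym {γ : Sym} {ts : Fin (Sg.arity γ) → Tm Sg} {i : Fin (Sg.arity γ)} {t' : Tm Sg} :
      Step gt (ts i) t' → Step gt (.sym γ ts) (.sym γ (Function.update ts i t'))
  | congLet₁ {t t' u : Tm Sg} : Step gt t t' → Step gt (.letin t u) (.letin t' u)
  | congLet₂ {t u u' : Tm Sg} : Step gt u u' → Step gt (.letin t u) (.letin t u')

/-- `SN gt t`: `t` is strongly normalizing under `≻̇` (every reduction sequence
from `t` terminates, i.e. `t` is accessible for the converse of `Step gt`). -/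
def SN {Sym B : Type} {Sg : Signature Sym B} (gt : Sym → Sym → Prop) (t : Tm Sg) : Prop :=
  Acc (fun a b => Step gt b a) t

/-- Continuations: stacks of frames `let x ⇐ [] in u`. -/
inductive Kont {Sym B : Type} (Sg : Signature Sym B) : Type where
  | nil : Kont Sg
  | cons : Kont Sg → Tm Sg → Kont Sg

namespace Kont

variable {Sym B : Type} {Sg : Signature Sym B}

/-- `K.plug t` = `K@t`: plug a term into the hole of a continuation. -/
def plug : Kont Sg → Tm Sg → Tm Sg
  | .nil, t => t
  | .cons K u, t => K.plug (.letin t u)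

/-- `|K|`: the number of frames of a continuation. -/
def len : Kont Sg → ℕ
  | .nil => 0
  | .cons K _ => K.len + 1

end Kont

/-- The reducibility predicate, by recursion on the type:
`Red B t = SN t`; `Red (S→T) s` means `s t` is reducible for every reducible `t`;
`Red (E T) t` means `K@t` is SN for every continuation `K ∈ Red_T^⊤`. -/
def Red {Sym B : Type} {Sg : Signature Sym B} (gt : Sym → Sym → Prop) :
    Ty B → Tm Sg → Prop
  | .base _, t => SN gt t
  | .arrow S T, s => ∀ t : Tm Sg, Red gt S t → Red gt T (.app s t)
  | .eff T, t => ∀ K : Kont Sg,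
      (∀ u : Tm Sg, Red gt T u → SN gt (K.plug (.pure u))) → SN gt (K.plug t)

/-- `Red_T^⊤(K)`: `K@pure(t)` is SN for every `t ∈ Red_T`. -/
def RedTop {Sym B : Type} {Sg : Signature Sym B} (gt : Sym → Sym → Prop)
    (T : Ty B) (K : Kont Sg) : Prop :=
  ∀ t : Tm Sg, Red gt T t → SN gt (K.plug (.pure t))

/-- Typing judgment `Γ ⊢ t : T` of the metalanguage (contexts are lists of types,
read by de Bruijn index).  Effect symbols take `n` arguments of a common type
`E T` and return `E T`; function symbols follow their declared signature. -/
inductive HasTy {Sym B : Type} (Sg : Signature Sym B) :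
    List (Ty B) → Tm Sg → Ty B → Prop where
  | var {Γ : List (Ty B)} {n : ℕ} {T : Ty B} :
      Γ[n]? = some T → HasTy Sg Γ (.var n) T
  | lam {Γ : List (Ty B)} {S T : Ty B} {u : Tm Sg} :
      HasTy Sg (S :: Γ) u T → HasTy Sg Γ (.lam u) (.arrow S T)
  | app {Γ : List (Ty B)} {S T : Ty B} {s t : Tm Sg} :
      HasTy Sg Γ s (.arrow S T) → HasTy Sg Γ t S → HasTy Sg Γ (.app s t) T
  | pure {Γ : List (Ty B)} {T : Ty B} {t : Tm Sg} :
      HasTy Sg Γ t T → HasTy Sg Γ (.pure t) (.eff T)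
  | letin {Γ : List (Ty B)} {S T : Ty B} {t u : Tm Sg} :
      HasTy Sg Γ t (.eff S) → HasTy Sg (S :: Γ) u (.eff T) →
      HasTy Sg Γ (.letin t u) (.eff T)
  | effSym {Γ : List (Ty B)} {T : Ty B} {e : Sym} {ts : Fin (Sg.arity e) → Tm Sg} :
      Sg.isEffect e → (∀ i, HasTy Sg Γ (ts i) (.eff T)) →
      HasTy Sg Γ (.sym e ts) (.eff T)
  | funSym {Γ : List (Ty B)} {f : Sym} {ts : Fin (Sg.arity f) → Tm Sg} :
      ¬ Sg.isEffect f → (∀ i, HasTy Sg Γ (ts i) (Sg.argTy f i)) →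
      HasTy Sg Γ (.sym f ts) (Sg.resTy f)


namespace Tm

variable {Sym B : Type} {Sg : Signature Sym B}

theorem upRen_comp (ρ ρ' : ℕ → ℕ) :
    (fun n => upRen ρ (upRen ρ' n)) = upRen (fun n => ρ (ρ' n)) := by
  funext n; cases n <;> rfl

theorem rename_rename (ρ ρ' : ℕ → ℕ) (t : Tm Sg) :
    (t.rename ρ').rename ρ = t.rename (fun n => ρ (ρ' n)) := by
  induction t generalizing ρ ρ' with
  | var n => rfl
  | lam u ih => simp only [rename, ih, upRen_comp]
  | app s t ihs iht => simp only [rename, ihs, iht]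
  | pure t ih => simp only [rename, ih]
  | sym γ ts ih => simp only [rename]; exact congrArg _ (funext fun i => ih i ρ ρ')
  | letin t u iht ihu => simp only [rename, iht, ihu, upRen_comp]

theorem upSub_var (ρ : ℕ → ℕ) :
    (upSub (fun n => (.var (ρ n) : Tm Sg))) = fun n => (.var (upRen ρ n) : Tm Sg) := by
  funext n; cases n <;> rfl

theorem rename_eq_subst (ρ : ℕ → ℕ) (t : Tm Sg) :
    t.rename ρ = t.subst (fun n => .var (ρ n)) := by
  induction t generalizing ρ with
  | var n => rfl
  | lam u ih => simp only [rename, subst, upSub_var, ← ih]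
  | app s t ihs iht => simp only [rename, subst, ihs, iht]
  | pure t ih => simp only [rename, subst, ih]
  | sym γ ts ih => simp only [rename, subst]; exact congrArg _ (funext fun i => ih i ρ)
  | letin t u iht ihu => simp only [rename, subst, upSub_var, ← iht, ← ihu]

theorem upSub_comp_upRen (σ : ℕ → Tm Sg) (ρ : ℕ → ℕ) :
    (fun n => upSub σ (upRen ρ n)) = upSub (fun n => σ (ρ n)) := by
  funext n; cases n <;> rfl

theorem subst_rename (σ : ℕ → Tm Sg) (ρ : ℕ → ℕ) (t : Tm Sg) :
    (t.rename ρ).subst σ = t.subst (fun n => σ (ρ n)) := by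
  induction t generalizing σ ρ with
  | var n => rfl
  | lam u ih => simp only [rename, subst, ih, upSub_comp_upRen]
  | app s t ihs iht => simp only [rename, subst, ihs, iht]
  | pure t ih => simp only [rename, subst, ih]
  | sym γ ts ih => simp only [rename, subst]; exact congrArg _ (funext fun i => ih i σ ρ)
  | letin t u iht ihu => simp only [rename, subst, iht, ihu, upSub_comp_upRen]

theorem upSub_rename (ρ : ℕ → ℕ) (σ : ℕ → Tm Sg) :
    (fun n => (upSub σ n).rename (upRen ρ)) = upSub (fun n => (σ n).rename ρ) := by
  funext n; cases n with
  | zero => rfl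
  | succ n => simp only [upSub, rename_rename]; try rfl

theorem rename_subst (ρ : ℕ → ℕ) (σ : ℕ → Tm Sg) (t : Tm Sg) :
    (t.subst σ).rename ρ = t.subst (fun n => (σ n).rename ρ) := by
  induction t generalizing σ ρ with
  | var n => rfl
  | lam u ih => simp only [subst, rename, ih, upSub_rename]
  | app s t ihs iht => simp only [subst, rename, ihs, iht]
  | pure t ih => simp only [subst, rename, ih]
  | sym γ ts ih => simp only [subst, rename]; exact congrArg _ (funext fun i => ih i ρ σ)
  | letin t u iht ihu => simp only [subst, rename, iht, ihu, upSub_rename]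

theorem upSub_subst (σ τ : ℕ → Tm Sg) :
    (fun n => (upSub τ n).subst (upSub σ)) = upSub (fun n => (τ n).subst σ) := by
  funext n; cases n with
  | zero => rfl
  | succ n =>
      simp only [upSub, subst_rename, rename_subst]
      try rfl

theorem subst_subst (σ τ : ℕ → Tm Sg) (t : Tm Sg) :
    (t.subst τ).subst σ = t.subst (fun n => (τ n).subst σ) := by
  induction t generalizing σ τ with
  | var n => rfl
  | lam u ih => simp only [subst, ih, upSub_subst]
  | app s t ihs iht => simp only [subst, ihs, iht]
  | pure t ih => simp only [subst, ih]
  | sym γ ts ih => simp only [subst]; exact congrArg _ (funext fun i => ih i σ τ)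
  | letin t u iht ihu => simp only [subst, iht, ihu, upSub_subst]

theorem upSub_id : (upSub (fun n => (.var n : Tm Sg))) = fun n => (.var n : Tm Sg) := by
  funext n; cases n <;> rfl

theorem subst_id (t : Tm Sg) : t.subst (fun n => .var n) = t := by
  induction t with
  | var n => rfl
  | lam u ih => simp only [subst, upSub_id, ih]
  | app s t ihs iht => simp only [subst, ihs, iht]
  | pure t ih => simp only [subst, ih]
  | sym γ ts ih => simp only [subst]; exact congrArg _ (funext fun i => ih i)
  | letin t u iht ihu => simp only [subst, upSub_id, iht, ihu]

/-- substitution commutes with `subst0`. -/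
theorem subst0_subst (σ : ℕ → Tm Sg) (t u : Tm Sg) :
    (Tm.subst0 t u).subst σ = Tm.subst0 (t.subst σ) (u.subst (upSub σ)) := by
  simp only [Tm.subst0, subst_subst]
  congr 1; funext n
  cases n with
  | zero => rfl
  | succ n => simp only [upSub, subst_rename]; exact (subst_id _).symm

/-- substitution under two binders commutes with the shift used by let-assoc. -/
theorem ren_shift_subst (σ : ℕ → Tm Sg) (u : Tm Sg) :
    (u.rename (upRen Nat.succ)).subst (upSub (upSub σ)) =
      (u.subst (upSub σ)).rename (upRen Nat.succ) := by
  simp only [subst_rename, rename_subst]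
  congr 1; funext n
  cases n with
  | zero => rfl
  | succ n =>
      simp only [upRen, upSub, rename_rename]
      try rfl

/-- `subst0 t` kills the shift on the second let-assoc body. -/
theorem subst0_ren_shift (t v : Tm Sg) :
    (v.rename (upRen Nat.succ)).subst
      (upSub (fun n => match n with | 0 => t | n + 1 => .var n)) = v := by
  rw [subst_rename]
  have h : (fun n => upSub (Sg := Sg) (fun n => match n with | 0 => t | n + 1 => .var n)
      (upRen Nat.succ n)) = fun n => (.var n : Tm Sg) := by
    funext n; cases n <;> rfl
  rw [h, subst_id]

end Tm

section Steps
variable {Sym B : Type} {Sg : Signature Sym B} {gt : Sym → Sym → Prop}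

/-- RPO is closed under substitution. -/
theorem RPO.subst {s t : Tm Sg} (h : RPO gt s t) (σ : ℕ → Tm Sg) :
    RPO gt (s.subst σ) (t.subst σ) := by
  induction h with
  | lexArgs i hpre hlt hdom ihlt ihdom =>
      exact RPO.lexArgs i (fun j hj => congrArg (Tm.subst σ) (hpre j hj)) ihlt
        (fun j => ihdom j)
  | symGt hγ hdom ihdom => exact RPO.symGt hγ (fun j => ihdom j)
  | subtermLt i h ih => exact RPO.subtermLt i ih
  | subtermEq i h => exact RPO.subtermEq i (congrArg (Tm.subst σ) h)

theorem Function.update_subst {γ : Sym} (σ : ℕ → Tm Sg)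
    (ts : Fin (Sg.arity γ) → Tm Sg) (i : Fin (Sg.arity γ)) (t' : Tm Sg) :
    (fun j => (Function.update ts i t' j).subst σ) =
      Function.update (fun j => (ts j).subst σ) i (t'.subst σ) := by
  funext j
  by_cases hij : j = i
  · subst hij; simp
  · simp [Function.update_of_ne hij]

/-- `Step` is closed under substitution. -/
theorem Step.subst {a b : Tm Sg} (h : Step gt a b) (σ : ℕ → Tm Sg) :
    Step gt (a.subst σ) (b.subst σ) := by
  induction h generalizing σ with
  | rpo h => exact Step.rpo (h.subst σ)
  | beta => rw [Tm.subst0_subst]; exact Step.beta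
  | letBeta => rw [Tm.subst0_subst]; exact Step.letBeta
  | letAssoc =>
      show Step gt (Tm.letin (Tm.letin _ _) _) _
      simp only [Tm.subst, Tm.ren_shift_subst]
      exact Step.letAssoc
  | effAssoc he => exact Step.effAssoc he
  | congLam _ ih => exact Step.congLam (ih _)
  | congApp₁ _ ih => exact Step.congApp₁ (ih _)
  | congApp₂ _ ih => exact Step.congApp₂ (ih _)
  | congPure _ ih => exact Step.congPure (ih _)
  | @congSym γ ts i t' _ ih =>
      show Step gt (Tm.sym γ fun j => (ts j).subst σ) _
      simp only [Tm.subst, Function.update_subst]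
      exact Step.congSym (ih σ)
  | congLet₁ _ ih => exact Step.congLet₁ (ih _)
  | congLet₂ _ ih => exact Step.congLet₂ (ih _)

theorem Step.rename {a b : Tm Sg} (h : Step gt a b) (ρ : ℕ → ℕ) :
    Step gt (a.rename ρ) (b.rename ρ) := by
  rw [Tm.rename_eq_subst, Tm.rename_eq_subst]; exact h.subst _

/-- Steps lift through plugging into a continuation. -/
theorem Step.plug {a b : Tm Sg} (K : Kont Sg) (h : Step gt a b) :
    Step gt (K.plug a) (K.plug b) := by
  induction K generalizing a b with
  | nil => exact h
  | cons K u ih => exact ih (Step.congLet₁ h)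

/-- The left-hand side of an RPO inequality is symbol-headed. -/
theorem RPO.lhs_sym {s t : Tm Sg} (h : RPO gt s t) :
    ∃ γ ss, s = Tm.sym γ ss := by
  cases h <;> exact ⟨_, _, rfl⟩

theorem var_no_step {n : ℕ} {w : Tm Sg} (h : Step gt (.var n) w) : False := by
  cases h with
  | rpo h => obtain ⟨_, _, h⟩ := h.lhs_sym; cases h

theorem pure_step_inv {t w : Tm Sg} (h : Step gt (.pure t) w) :
    ∃ t', Step gt t t' ∧ w = .pure t' := by
  cases h with
  | rpo h => obtain ⟨_, _, h⟩ := h.lhs_sym; cases h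
  | congPure h => exact ⟨_, h, rfl⟩

/-- Strong normalization pulls back along step-preserving maps. -/
theorem sn_of_image {f : Tm Sg → Tm Sg}
    (hf : ∀ x y, Step gt x y → Step gt (f x) (f y)) {a : Tm Sg}
    (h : SN gt (f a)) : SN gt a := by
  generalize hfa : f a = b at h
  induction h generalizing a with
  | intro b _ ih =>
      subst hfa
      exact Acc.intro _ fun y hy => ih (f y) (hf _ _ hy) rfl

theorem SN.pure {t : Tm Sg} (h : SN gt t) : SN gt (Tm.pure t : Tm Sg) := by
  induction h with
  | intro t _ ih =>
      refine Acc.intro _ fun w hw => ?_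
      obtain ⟨t', ht', rfl⟩ := pure_step_inv hw
      exact ih t' ht'

end Steps

section Tri
variable {Sym B : Type} {Sg : Signature Sym B} {gt : Sym → Sym → Prop}

/-- Decomposition of a step out of `K@h`: either a step of the hole content,
a uniform step of the continuation, or an interaction at the innermost frame. -/
theorem plug_step_cases {K : Kont Sg} {h w : Tm Sg} (hs : Step gt (K.plug h) w) :
    (∃ h', Step gt h h' ∧ w = K.plug h') ∨
    (∃ K' : Kont Sg, (∀ r : Tm Sg, Step gt (K.plug r) (K'.plug r)) ∧ w = K'.plug h) ∨
    (∃ K₀ v, K = Kont.cons K₀ v ∧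
      ((∃ t₀, h = .pure t₀ ∧ w = K₀.plug (Tm.subst0 t₀ v)) ∨
       (∃ t₁ t₂, h = .letin t₁ t₂ ∧
          w = K₀.plug (.letin t₁ (.letin t₂ (v.rename (Tm.upRen Nat.succ))))) ∨
       (∃ e ts, Sg.isEffect e ∧ h = Tm.sym e ts ∧
          w = K₀.plug (.sym e fun i => .letin (ts i) v)))) := by
  induction K generalizing h w with
  | nil => exact Or.inl ⟨w, hs, rfl⟩
  | cons K v ih =>
      rcases ih hs with ⟨g, hg, rfl⟩ | ⟨K', hK', rfl⟩ | ⟨K₀, v₁, rfl, sub⟩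
      · cases hg with
        | rpo hr => obtain ⟨_, _, heq⟩ := hr.lhs_sym; cases heq
        | letBeta => exact Or.inr (Or.inr ⟨K, v, rfl, Or.inl ⟨_, rfl, rfl⟩⟩)
        | letAssoc => exact Or.inr (Or.inr ⟨K, v, rfl, Or.inr (Or.inl ⟨_, _, rfl, rfl⟩)⟩)
        | effAssoc he => exact Or.inr (Or.inr ⟨K, v, rfl, Or.inr (Or.inr ⟨_, _, he, rfl, rfl⟩)⟩)
        | congLet₁ hst => exact Or.inl ⟨_, hst, rfl⟩
        | congLet₂ hst =>
            exact Or.inr (Or.inl ⟨.cons K _, fun r => Step.plug K (Step.congLet₂ hst), rfl⟩)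
      · exact Or.inr (Or.inl ⟨.cons K' v, fun r => hK' (.letin r v), rfl⟩)
      · rcases sub with ⟨t₀, heq, hw⟩ | ⟨t₁, t₂, heq, hw⟩ | ⟨e, ts, he, heq, hw⟩
        · cases heq
        · cases heq
          exact Or.inr (Or.inl ⟨.cons K₀ (.letin v (v₁.rename (Tm.upRen Nat.succ))),
            fun r => Step.plug K₀ Step.letAssoc, hw⟩)
        · cases heq

abbrev SRT (gt : Sym → Sym → Prop) : Tm Sg → Tm Sg → Prop :=
  Relation.ReflTransGen (Step gt)

theorem SRT.plug {a b : Tm Sg} (K : Kont Sg) (h : SRT gt a b) :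
    SRT gt (K.plug a) (K.plug b) :=
  Relation.ReflTransGen.lift _ (fun _ _ hs => Step.plug K hs) _ _ h

theorem srt_sym {γ : Sym} {ts ts' : Fin (Sg.arity γ) → Tm Sg}
    (h : ∀ i, SRT gt (ts i) (ts' i)) :
    SRT gt (Tm.sym γ ts) (Tm.sym γ ts') := by
  suffices H : ∀ k : ℕ, k ≤ Sg.arity γ → SRT gt (Tm.sym γ ts)
      (Tm.sym γ (fun i => if i.1 < k then ts' i else ts i)) by
    have h2 := H (Sg.arity γ) le_rfl
    have : (fun i : Fin (Sg.arity γ) => if i.1 < Sg.arity γ then ts' i else ts i) = ts' := by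
      funext i; simp [i.isLt]
    rwa [this] at h2
  intro k hk
  induction k with
  | zero =>
      have : (fun i : Fin (Sg.arity γ) => if i.1 < 0 then ts' i else ts i) = ts := by
        funext i; simp
      rw [this]
  | succ k ihk =>
      have hk' : k < Sg.arity γ := hk
      refine Relation.ReflTransGen.trans (ihk (le_of_lt hk')) ?_
      set i₀ : Fin (Sg.arity γ) := ⟨k, hk'⟩ with hi₀
      set g : Fin (Sg.arity γ) → Tm Sg := fun i => if i.1 < k then ts' i else ts i with hg
      have hstep : ∀ a b : Tm Sg, Step gt a b →
          Step gt (Tm.sym γ (Function.update g i₀ a)) (Tm.sym γ (Function.update g i₀ b)) := by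
        intro a b hs
        have h1 : Step gt (Function.update g i₀ a i₀) b := by simpa using hs
        have := Step.congSym (gt := gt) (ts := Function.update g i₀ a) (i := i₀) h1
        rwa [Function.update_idem] at this
      have hlift : SRT gt (Tm.sym γ (Function.update g i₀ (ts i₀)))
          (Tm.sym γ (Function.update g i₀ (ts' i₀))) :=
        Relation.ReflTransGen.lift (fun x => Tm.sym γ (Function.update g i₀ x))
        hstep _ _ (h i₀)
      have e2 : g i₀ = ts i₀ := by simp [hg, hi₀]
      have e1 : Function.update g i₀ (ts i₀) = g := by
        rw [← e2]; exact Function.update_eq_self _ _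
      have e3 : Function.update g i₀ (ts' i₀) =
          fun i => if i.1 < k + 1 then ts' i else ts i := by
        funext i
        by_cases hik : i = i₀
        · subst hik; simp [hi₀]
        · rw [Function.update_of_ne hik]
          have : i.1 = k → False := fun hv => hik (Fin.ext (by simpa [hi₀] using hv))
          by_cases hlt : i.1 < k
          · simp [hg, hlt, Nat.lt_succ_of_lt hlt]
          · have h2 : ¬ i.1 < k + 1 := by
              intro hc
              rcases Nat.lt_succ_iff_lt_or_eq.mp hc with hc | hc
              · exact hlt hc
              · exact this hc
            simp [hg, hlt, h2]
      simp only [e1, e3] at hlift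
      exact hlift

theorem srt_subst_arg (u : Tm Sg) {σ σ' : ℕ → Tm Sg}
    (h : ∀ n, SRT gt (σ n) (σ' n)) : SRT gt (u.subst σ) (u.subst σ') := by
  induction u generalizing σ σ' with
  | var n => exact h n
  | lam u ih =>
      refine Relation.ReflTransGen.lift Tm.lam (fun _ _ hs => Step.congLam hs) _ _ (ih ?_)
      intro n; cases n with
      | zero => exact Relation.ReflTransGen.refl
      | succ n =>
          exact Relation.ReflTransGen.lift (fun x => x.rename Nat.succ)
            (fun _ _ hs => Step.rename hs _) _ _ (h n)
  | app s t ihs iht =>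
      refine Relation.ReflTransGen.trans
        (Relation.ReflTransGen.lift (fun x => Tm.app x (t.subst σ))
          (fun _ _ hs => Step.congApp₁ hs) _ _ (ihs h)) ?_
      exact Relation.ReflTransGen.lift (fun x => Tm.app (s.subst σ') x)
        (fun _ _ hs => Step.congApp₂ hs) _ _ (iht h)
  | pure t ih =>
      exact Relation.ReflTransGen.lift Tm.pure (fun _ _ hs => Step.congPure hs) _ _ (ih h)
  | sym γ ts ih => exact srt_sym (fun i => ih i h)
  | letin t u iht ihu =>
      refine Relation.ReflTransGen.trans
        (Relation.ReflTransGen.lift (fun x => Tm.letin x (u.subst (Tm.upSub σ)))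
          (fun _ _ hs => Step.congLet₁ hs) _ _ (iht h)) ?_
      refine Relation.ReflTransGen.lift (fun x => Tm.letin (t.subst σ') x)
        (fun _ _ hs => Step.congLet₂ hs) _ _ (ihu ?_)
      intro n; cases n with
      | zero => exact Relation.ReflTransGen.refl
      | succ n =>
          exact Relation.ReflTransGen.lift (fun x => x.rename Nat.succ)
            (fun _ _ hs => Step.rename hs _) _ _ (h n)

/-- `subst0` is monotone in the substituted term, up to `⇝*`. -/
theorem srt_subst0 {t t' : Tm Sg} (u : Tm Sg) (h : Step gt t t') :
    SRT gt (Tm.subst0 t u) (Tm.subst0 t' u) := by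
  refine srt_subst_arg u ?_
  intro n; cases n with
  | zero => exact Relation.ReflTransGen.single h
  | succ n => exact Relation.ReflTransGen.refl

end Tri

section CR
variable {Sym B : Type} {Sg : Signature Sym B} {gt : Sym → Sym → Prop}

/-- Neutral terms: variables and applications. -/
inductive Neutral : Tm Sg → Prop where
  | var (n : ℕ) : Neutral (.var n)
  | app (s t : Tm Sg) : Neutral (.app s t)

/-- CR2: reducibility is closed under reduction. -/
theorem Red.step {T : Ty B} {t t' : Tm Sg} (h : Red gt T t) (hs : Step gt t t') :
    Red gt T t' := by
  induction T generalizing t t' with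
  | base b => exact Acc.inv h hs
  | arrow S T ihS ihT =>
      simp only [Red] at h ⊢
      intro a ha
      exact ihT (h a ha) (Step.congApp₁ hs)
  | eff T ihT =>
      simp only [Red] at h ⊢
      intro K hK
      exact Acc.inv (h K hK) (Step.plug K hs)

/-- CR3 at effect types, given a reducible seed `z`. -/
theorem red_eff_neutral {T : Ty B} {t : Tm Sg} (hne : Neutral t)
    (hred : ∀ t', Step gt t t' → Red gt (.eff T) t')
    (z : Tm Sg) (hz : Red gt T z) : Red gt (.eff T) t := by
  simp only [Red] at hred ⊢
  suffices H : ∀ M, Acc (fun a b : Tm Sg => Step gt b a) M → ∀ K : Kont Sg,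
      M = K.plug (.pure z) → (∀ u, Red gt T u → SN gt (K.plug (.pure u))) →
      SN gt (K.plug t) by
    intro K hK
    exact H _ (hK z hz) K rfl hK
  intro M hM
  induction hM with
  | intro M _ ih =>
      intro K hMe hK
      refine Acc.intro _ fun w hw => ?_
      rcases plug_step_cases hw with ⟨t', hst, rfl⟩ | ⟨K', hK', rfl⟩ | ⟨K₀, v, rfl, sub⟩
      · exact hred t' hst K hK
      · subst hMe
        exact ih _ (hK' (.pure z)) K' rfl (fun u hu => Acc.inv (hK u hu) (hK' (.pure u)))
      · rcases sub with ⟨t₀, heq, _⟩ | ⟨t₁, t₂, heq, _⟩ | ⟨e, ts, _, heq, _⟩ <;>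
          (subst heq; cases hne)

/-- CR1 and CR3, by induction on the type. -/
theorem cr (T : Ty B) :
    (∀ t : Tm Sg, Red gt T t → SN gt t) ∧
    (∀ t : Tm Sg, Neutral t → (∀ t', Step gt t t' → Red gt T t') → Red gt T t) := by
  induction T with
  | base b =>
      exact ⟨fun t ht => ht, fun t hne hred => Acc.intro _ fun w hw => hred w hw⟩
  | arrow S T ihS ihT =>
      have red_var_S : ∀ n : ℕ, Red gt S (.var n : Tm Sg) :=
        fun n => ihS.2 _ (Neutral.var n) (fun t' h => (var_no_step h).elim)
      constructor
      · intro t ht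
        simp only [Red] at ht
        have h2 : SN gt (Tm.app t (.var 0) : Tm Sg) := ihT.1 _ (ht _ (red_var_S 0))
        exact sn_of_image (fun x y hs => Step.congApp₁ hs) h2
      · intro t hne hred
        simp only [Red]
        intro a ha
        suffices H : ∀ a : Tm Sg, SN gt a → Red gt S a → Red gt T (.app t a) from
          H a (ihS.1 a ha) ha
        intro a hsna
        induction hsna with
        | intro a _ iha =>
            intro ha
            refine ihT.2 _ (Neutral.app t a) ?_
            intro w hw
            cases hw with
            | rpo hr => obtain ⟨_, _, heq⟩ := hr.lhs_sym; cases heq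
            | beta => cases hne
            | congApp₁ hst =>
                have h3 := hred _ hst
                simp only [Red] at h3
                exact h3 a ha
            | congApp₂ hst => exact iha _ hst (Red.step ha hst)
  | eff T ihT =>
      constructor
      · intro t ht
        simp only [Red] at ht
        have h1 := ht Kont.nil (fun u hu => SN.pure (ihT.1 u hu))
        simpa [Kont.plug] using h1
      · intro t hne hred
        exact red_eff_neutral hne hred (.var 0)
          (ihT.2 _ (Neutral.var 0) (fun t' h => (var_no_step h).elim))

theorem cr1 {T : Ty B} {t : Tm Sg} (h : Red gt T t) : SN gt t := (cr T).1 t h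

end CR

section Main
variable {Sym B : Type} {Sg : Signature Sym B} {gt : Sym → Sym → Prop}

theorem transGen_flip {α : Type*} {r : α → α → Prop} {a b : α}
    (h : Relation.TransGen r a b) : Relation.TransGen (fun x y => r y x) b a :=
  Relation.TransGen.swap (r := r) _ _ h

/-- The key expansion lemma: `let x ⇐ pure t in u` plugged in `K` is SN
whenever `t` and `K@(u{t/x})` are. -/
theorem sn_let_pure_aux (M : Tm Sg)
    (hM : Acc (Relation.TransGen (fun a b : Tm Sg => Step gt b a)) M) :
    ∀ t : Tm Sg, SN gt t → ∀ (n : ℕ) (u : Tm Sg) (K : Kont Sg), K.len ≤ n →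
      M = K.plug (Tm.subst0 t u) → SN gt (K.plug (.letin (.pure t) u)) := by
  induction hM with
  | intro M hacc ihM =>
  intro t ht
  induction ht with
  | intro t hacct iht =>
  intro n
  induction n using Nat.strong_induction_on with
  | _ n ihn =>
  intro u K hlen hMe
  refine Acc.intro _ fun w hw => ?_
  rcases plug_step_cases hw with ⟨g, hg, rfl⟩ | ⟨K', hK', rfl⟩ | ⟨K₀, v, rfl, sub⟩
  · -- step inside `letin (pure t) u`
    cases hg with
    | rpo hr => obtain ⟨_, _, heq⟩ := hr.lhs_sym; cases heq
    | letBeta =>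
        rw [← hMe]
        exact Subrelation.accessible
          (q := fun a b : Tm Sg => Step gt b a)
          (fun h => Relation.TransGen.single (r := fun a b : Tm Sg => Step gt b a) h)
          (Acc.intro M hacc)
    | congLet₁ hst =>
        obtain ⟨t', hst', rfl⟩ := pure_step_inv hst
        have hsrt : SRT gt (K.plug (Tm.subst0 t u)) (K.plug (Tm.subst0 t' u)) :=
          SRT.plug K (srt_subst0 u hst')
        rcases Relation.reflTransGen_iff_eq_or_transGen.mp hsrt with heq | htg
        · exact iht t' hst' n u K hlen (by rw [hMe, ← heq])
        · have h2 : Relation.TransGen (fun a b : Tm Sg => Step gt b a)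
              (K.plug (Tm.subst0 t' u)) M := by rw [hMe]; exact transGen_flip htg
          exact ihM _ h2 t' (hacct t' hst') n u K hlen rfl
    | @congLet₂ _ _ u' hst =>
        have h1 : Step gt (K.plug (Tm.subst0 t u)) (K.plug (Tm.subst0 t u')) :=
          Step.plug K (hst.subst _)
        have h2 : Relation.TransGen (fun a b : Tm Sg => Step gt b a)
            (K.plug (Tm.subst0 t u')) M := by rw [hMe]; exact Relation.TransGen.single h1
        exact ihM _ h2 t (Acc.intro t hacct) n u' K hlen rfl
  · -- uniform step of the continuation
    have h2 : Relation.TransGen (fun a b : Tm Sg => Step gt b a)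
        (K'.plug (Tm.subst0 t u)) M := by
      rw [hMe]; exact Relation.TransGen.single (hK' _)
    exact ihM _ h2 t (Acc.intro t hacct) K'.len u K' le_rfl rfl
  · -- interaction at the innermost frame: only let-assoc is possible
    rcases sub with ⟨t₀, heq, hw⟩ | ⟨t₁, t₂, heq, hw⟩ | ⟨e, ts, he, heq, hw⟩
    · cases heq
    · injection heq with h1 h2
      subst h1; subst h2
      have hs0 : Tm.subst0 t (.letin u (v.rename (Tm.upRen Nat.succ)))
          = Tm.letin (Tm.subst0 t u) v := by
        show Tm.letin _ _ = _
        rw [Tm.subst0_ren_shift]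
        rfl
      have hMe' : M = K₀.plug (Tm.subst0 t (.letin u (v.rename (Tm.upRen Nat.succ)))) := by
        rw [hs0]; exact hMe
      rw [hw]
      exact ihn K₀.len (Nat.lt_of_succ_le hlen)
        (.letin u (v.rename (Tm.upRen Nat.succ))) K₀ le_rfl hMe'
    · cases heq

theorem sn_let_pure {t u : Tm Sg} {K : Kont Sg} (ht : SN gt t)
    (hM : SN gt (K.plug (Tm.subst0 t u))) : SN gt (K.plug (.letin (.pure t) u)) :=
  sn_let_pure_aux _ hM.transGen t ht K.len u K le_rfl rfl

end Main

/-- If `Red_{E(S)}(s)`, and `u` is such that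
`Red_{E(T)}(u{s'/x})` for every `s'` with `Red_S(s')`, then
`Red_{E(T)}(let x ⇐ s in u)`. -/
theorem red_let {Sym B : Type} {Sg : Signature Sym B} (gt : Sym → Sym → Prop)
    (hwf : WellFounded (fun a b : Sym => gt b a)) (htrans : Transitive gt)
    (S T : Ty B) (s u : Tm Sg)
    (hs : Red gt (Ty.eff S) s)
    (hu : ∀ s' : Tm Sg, Red gt S s' → Red gt (Ty.eff T) (Tm.subst0 s' u)) :
    Red gt (Ty.eff T) (Tm.letin s u) := by
  simp only [Red] at hs ⊢
  intro K hK
  have hTop : ∀ t : Tm Sg, Red gt S t → SN gt ((Kont.cons K u).plug (.pure t)) := by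
    intro t ht
    show SN gt (K.plug (.letin (.pure t) u))
    have hM : SN gt (K.plug (Tm.subst0 t u)) := by
      have h2 := hu t ht
      simp only [Red] at h2
      exact h2 K hK
    exact sn_let_pure (cr1 ht) hM
  exact hs (Kont.cons K u) hTop
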